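/- Let A, B be finite nonempty sets of integers with min A = min B = 0, max A = M, max B = N, M ≥ N. If the number of holes in A (i.e., |[0,M] \ A|) is at most |B| - 1, then the entire interval [N, M] is contained in A + B. -/
import Mathlib


open scoped Pointwise

theorem stmt0 (A B : Finset ℤ) (hA : A.Nonempty) (hB : B.Nonempty) (M N : ℤ)
    (hminA : A.min' hA = 0) (hminB : B.min' hB = 0)
    (hmaxA : A.max' hA = M) (hmaxB : B.max' hB = N) (hMN : N ≤ M)
    (hhole : ((Finset.Icc 0 M \ A).card : ℤ) ≤ (B.card : ℤ) - 1) :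
    Finset.Icc N M ⊆ A + B := by
  intro x hx
  rw [Finset.mem_Icc] at hx
  set C : Finset ℤ := B.image (fun b => x - b) with hC
  have hCsub : C ⊆ Finset.Icc 0 M := by
    intro y hy
    simp only [hC, Finset.mem_image] at hy
    obtain ⟨b, hb, rfl⟩ := hy
    have h1 : b ≤ N := hmaxB ▸ B.le_max' b hb
    have h2 : (0:ℤ) ≤ b := hminB ▸ B.min'_le b hb
    rw [Finset.mem_Icc]
    omega
  have hCcard : C.card = B.card := Finset.card_image_of_injective _ (fun a b h => by omega)
  by_cases h : ∃ b ∈ B, x - b ∈ A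
  · obtain ⟨b, hb, ha⟩ := h
    exact Finset.mem_add.2 ⟨x - b, ha, b, hb, by ring⟩
  · exfalso
    push_neg at h
    have hsub : C ⊆ Finset.Icc 0 M \ A := by
      intro y hy
      rw [Finset.mem_sdiff]
      refine ⟨hCsub hy, ?_⟩
      simp only [hC, Finset.mem_image] at hy
      obtain ⟨b, hb, rfl⟩ := hy
      exact h b hb
    have := Finset.card_le_card hsub
    omega
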